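/- Assume every h ∈ ℋ satisfies h(x) ∈ [0,b], let v(h) = E[(h(X) − E[h(X')])²], let λ : ℋ → (0, n/b), and define F_λ(h,X) = λ(h)Δ(h,X) − (λ(h)²/(1 − bλ(h)/n))·(v(h)/n). Then for every h ∈ ℋ, E[e^{2F_λ(h,X)}] ≤ 1. -/

import Mathlib

open MeasureTheory

private lemma exp_quad_neg {u : ℝ} (hu : u ≤ 0) : Real.exp u ≤ 1 + u + u ^ 2 / 2 := by
  have hmono : AntitoneOn (fun u : ℝ => 1 + u + u ^ 2 / 2 - Real.exp u) (Set.Iic 0) := by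
    apply antitoneOn_of_deriv_nonpos (convex_Iic 0)
    · fun_prop
    · fun_prop
    · intro x hx
      have hx0 : x < 0 := by rw [interior_Iic] at hx; exact hx
      have hd : HasDerivAt (fun u : ℝ => 1 + u + u ^ 2 / 2 - Real.exp u)
          (1 + x - Real.exp x) x := by
        have h1 : HasDerivAt (fun u : ℝ => 1 + u + u ^ 2 / 2) (1 + x) x := by
          have h := ((hasDerivAt_id x).const_add 1).add
            (((hasDerivAt_id x).pow 2).div_const 2)
          exact h.congr_deriv (by simp [id_eq])
        exact h1.sub (Real.hasDerivAt_exp x)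
      rw [hd.deriv]
      have := Real.add_one_le_exp x
      linarith
  have h := hmono (Set.mem_Iic.2 hu) (Set.mem_Iic.2 le_rfl) hu
  simp only [Real.exp_zero] at h
  linarith

private lemma pade {u : ℝ} (hu : 0 ≤ u) : (2 - u) * Real.exp u ≤ 2 + u := by
  have hmono : MonotoneOn (fun u : ℝ => (2 + u) - (2 - u) * Real.exp u) (Set.Ici 0) := by
    apply monotoneOn_of_deriv_nonneg (convex_Ici 0)
    · fun_prop
    · fun_prop
    · intro x hx
      have hd : HasDerivAt (fun u : ℝ => (2 + u) - (2 - u) * Real.exp u)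
          (1 - ((-1) * Real.exp x + (2 - x) * Real.exp x)) x := by
        have h2 : HasDerivAt (fun u : ℝ => (2 - u) * Real.exp u)
            ((-1) * Real.exp x + (2 - x) * Real.exp x) x := by
          have := ((hasDerivAt_id x).const_sub 2).mul (Real.hasDerivAt_exp x)
          exact this.congr_deriv (by simp)
        exact ((hasDerivAt_id x).const_add 2).sub h2
      rw [hd.deriv]
      have h3 : (1 - x) * Real.exp x ≤ 1 := by
        have h4 : (1 - x) ≤ Real.exp (-x) := by
          have := Real.add_one_le_exp (-x); linarith
        have h5 : (1 - x) * Real.exp x ≤ Real.exp (-x) * Real.exp x :=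
          mul_le_mul_of_nonneg_right h4 (Real.exp_pos x).le
        rwa [← Real.exp_add, neg_add_cancel, Real.exp_zero] at h5
      nlinarith [Real.exp_pos x]
  have h := hmono (Set.mem_Ici.2 le_rfl) (Set.mem_Ici.2 hu) hu
  simp only [Real.exp_zero] at h
  linarith

/-- Pointwise Bernstein-type exponential bound. -/
private lemma exp_le_quad {u c : ℝ} (hc0 : 0 < c) (hc2 : c < 2) (huc : u ≤ c) :
    Real.exp u ≤ 1 + u + u ^ 2 / (2 - c) := by
  have h2c : 0 < 2 - c := by linarith
  rcases le_or_gt u 0 with hu | hu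
  · have h1 := exp_quad_neg hu
    have h2 : u ^ 2 / 2 ≤ u ^ 2 / (2 - c) :=
      div_le_div_of_nonneg_left (sq_nonneg u) h2c (by linarith)
    linarith
  · have hp := pade hu.le
    have h2u : 0 < 2 - u := by linarith
    have h1 : Real.exp u - 1 - u ≤ u ^ 2 / (2 - u) := by
      rw [le_div_iff₀ h2u]
      nlinarith
    have h2 : u ^ 2 / (2 - u) ≤ u ^ 2 / (2 - c) :=
      div_le_div_of_nonneg_left (sq_nonneg u) h2c (by linarith)
    linarith

/-- One-coordinate MGF bound. -/
private lemma mgf_le {𝒳 : Type*} [MeasurableSpace 𝒳] (μ : Measure 𝒳) [IsProbabilityMeasure μ]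
    (b : ℝ) (hb : 0 < b) (g : 𝒳 → ℝ) (hg : Measurable g)
    (hrange : ∀ y : 𝒳, g y ∈ Set.Icc 0 b) (t : ℝ) (ht : 0 < t) (htb : t * b < 2) :
    ∫ y, Real.exp (t * ((∫ z, g z ∂μ) - g y)) ∂μ
      ≤ Real.exp (t ^ 2 * (∫ y, (g y - ∫ z, g z ∂μ) ^ 2 ∂μ) / (2 - t * b)) := by
  set m := ∫ z, g z ∂μ with hm
  have h2c : 0 < 2 - t * b := by linarith
  have ig : Integrable g μ := by
    refine (integrable_const b).mono' hg.aestronglyMeasurable ?_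
    filter_upwards with y
    rw [Real.norm_eq_abs, abs_of_nonneg (hrange y).1]
    exact (hrange y).2
  have hm0 : 0 ≤ m := integral_nonneg fun y => (hrange y).1
  have hmb : m ≤ b := by
    have := integral_mono ig (integrable_const b) (fun y => (hrange y).2)
    simpa using this
  have i1 : Integrable (fun y => m - g y) μ := (integrable_const m).sub ig
  have i2 : Integrable (fun y => (m - g y) ^ 2) μ := by
    refine (integrable_const (b ^ 2)).mono'
      ((measurable_const.sub hg).pow_const 2).aestronglyMeasurable ?_
    filter_upwards with y
    rw [Real.norm_eq_abs, abs_of_nonneg (sq_nonneg _)]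
    have h1 := (hrange y).1; have h2 := (hrange y).2
    nlinarith
  have iexp : Integrable (fun y => Real.exp (t * (m - g y))) μ := by
    refine (integrable_const (Real.exp (t * b))).mono'
      (Real.measurable_exp.comp (measurable_const.mul (measurable_const.sub hg))
        ).aestronglyMeasurable ?_
    filter_upwards with y
    rw [Real.norm_eq_abs, abs_of_nonneg (Real.exp_pos _).le]
    apply Real.exp_le_exp.2
    have := (hrange y).1
    apply mul_le_mul_of_nonneg_left (by linarith) ht.le
  have iq : Integrable (fun y => 1 + t * (m - g y) + t ^ 2 / (2 - t * b) * (m - g y) ^ 2) μ :=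
    ((integrable_const 1).add (i1.const_mul t)).add (i2.const_mul _)
  have key : ∫ y, Real.exp (t * (m - g y)) ∂μ
      ≤ ∫ y, (1 + t * (m - g y) + t ^ 2 / (2 - t * b) * (m - g y) ^ 2) ∂μ := by
    refine integral_mono iexp iq fun y => ?_
    have huc : t * (m - g y) ≤ t * b := by
      have := (hrange y).1
      apply mul_le_mul_of_nonneg_left (by linarith) ht.le
    have h := exp_le_quad (mul_pos ht hb) htb huc
    have hring : (t * (m - g y)) ^ 2 / (2 - t * b)
        = t ^ 2 / (2 - t * b) * (m - g y) ^ 2 := by ring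
    rw [hring] at h
    exact h
  have hsum : ∫ y, (1 + t * (m - g y) + t ^ 2 / (2 - t * b) * (m - g y) ^ 2) ∂μ
      = 1 + t ^ 2 / (2 - t * b) * ∫ y, (m - g y) ^ 2 ∂μ := by
    have iadd : Integrable (fun y => 1 + t * (m - g y)) μ :=
      (integrable_const 1).add (i1.const_mul t)
    have i2' : Integrable (fun y => t ^ 2 / (2 - t * b) * (m - g y) ^ 2) μ :=
      i2.const_mul _
    rw [integral_add iadd i2', integral_add (integrable_const 1) (i1.const_mul t),
      integral_const, integral_const_mul, integral_const_mul,
      integral_sub (integrable_const m) ig, integral_const]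
    simp [hm]
  have hVeq : ∫ y, (m - g y) ^ 2 ∂μ = ∫ y, (g y - m) ^ 2 ∂μ := by
    congr 1; ext y; ring
  set V := ∫ y, (g y - m) ^ 2 ∂μ with hV
  have hfin : 1 + t ^ 2 / (2 - t * b) * ∫ y, (m - g y) ^ 2 ∂μ
      ≤ Real.exp (t ^ 2 * V / (2 - t * b)) := by
    rw [hVeq]
    have := Real.add_one_le_exp (t ^ 2 * V / (2 - t * b))
    have hr : t ^ 2 / (2 - t * b) * V = t ^ 2 * V / (2 - t * b) := by ring
    linarith [hr ▸ this]
  calc ∫ y, Real.exp (t * (m - g y)) ∂μ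
      ≤ ∫ y, (1 + t * (m - g y) + t ^ 2 / (2 - t * b) * (m - g y) ^ 2) ∂μ := key
    _ = 1 + t ^ 2 / (2 - t * b) * ∫ y, (m - g y) ^ 2 ∂μ := hsum
    _ ≤ Real.exp (t ^ 2 * V / (2 - t * b)) := hfin

/-- Bernstein auxiliary lemma: for `g : 𝒳 → [0,b]`, `λ ∈ (0, n/b)`,
`v = E[(g(X) − E[g(X')])²]` and
`F_λ(X) = λ·Δ(g,X) − (λ²/(1 − bλ/n))·(v/n)`, one has `E[e^{2F_λ(X)}] ≤ 1`. -/
theorem stmt_12 {𝒳 : Type*} [MeasurableSpace 𝒳] (μ : Measure 𝒳) [IsProbabilityMeasure μ]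
    (n : ℕ) (hn : 0 < n) (b : ℝ) (hb : 0 < b)
    (g : 𝒳 → ℝ) (hg : Measurable g) (hrange : ∀ y : 𝒳, g y ∈ Set.Icc 0 b)
    (lam : ℝ) (hlam0 : 0 < lam) (hlam1 : lam < n / b) :
    ∫ x, Real.exp (2 * (lam * ((∫ y, g y ∂μ) - (1 / n) * ∑ i : Fin n, g (x i))
        - lam ^ 2 / (1 - b * lam / n)
          * ((∫ y, (g y - ∫ y', g y' ∂μ) ^ 2 ∂μ) / n)))
      ∂(Measure.pi fun _ : Fin n => μ) ≤ 1 := by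
  have hn' : (0:ℝ) < n := by exact_mod_cast hn
  have hne : (n:ℝ) ≠ 0 := ne_of_gt hn'
  set m := ∫ y, g y ∂μ with hm
  set v := ∫ y, (g y - m) ^ 2 ∂μ with hv
  set t : ℝ := 2 * lam / n with htdef
  have ht : 0 < t := by positivity
  have hlb : lam * b < n := by
    have := (lt_div_iff₀ hb).1 hlam1
    linarith
  have htb : t * b < 2 := by
    rw [htdef, div_mul_eq_mul_div, div_lt_iff₀ hn']
    nlinarith
  have h2c : 0 < 2 - t * b := by linarith
  set A : ℝ := t ^ 2 * v / (2 - t * b) with hA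
  -- rewrite the exponent
  have hrw : ∀ x : Fin n → 𝒳,
      2 * (lam * (m - (1 / n) * ∑ i : Fin n, g (x i))
        - lam ^ 2 / (1 - b * lam / n) * (v / n))
      = (∑ i : Fin n, t * (m - g (x i))) - (n:ℝ) * A := by
    intro x
    have hsum : (∑ i : Fin n, t * (m - g (x i)))
        = t * ((n:ℝ) * m - ∑ i : Fin n, g (x i)) := by
      rw [← Finset.mul_sum, Finset.sum_sub_distrib, Finset.sum_const, Finset.card_univ,
        Fintype.card_fin, nsmul_eq_mul]
    rw [hsum, hA, htdef]
    have hD : (0:ℝ) < (n:ℝ) - b * lam := by nlinarith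
    have h1 : (1:ℝ) - b * lam / n = ((n:ℝ) - b * lam) / n := by field_simp
    have h2 : (2:ℝ) - 2 * lam / n * b = 2 * ((n:ℝ) - b * lam) / n := by
      field_simp
    rw [h1, h2]
    have hD' : ((n:ℝ) - b * lam) ≠ 0 := ne_of_gt hD
    field_simp
  letI : MeasureSpace 𝒳 := ⟨μ⟩
  haveI : SigmaFinite (volume : Measure 𝒳) := (by infer_instance : SigmaFinite μ)
  set K : ℝ := ∫ y, Real.exp (t * (m - g y)) ∂μ with hK
  have hpi : (∫ x : Fin n → 𝒳, ∏ i : Fin n, Real.exp (t * (m - g (x i)))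
      ∂(Measure.pi fun _ : Fin n => μ)) = K ^ n := by
    have h := MeasureTheory.integral_fintype_prod_eq_pow (𝕜 := ℝ) (ι := Fin n) (μ := μ)
      (fun y : 𝒳 => Real.exp (t * (m - g y)))
    rw [Fintype.card_fin] at h
    exact h
  have hKnn : 0 ≤ K := integral_nonneg fun y => (Real.exp_pos _).le
  have hKle : K ≤ Real.exp A := mgf_le μ b hb g hg hrange t ht htb
  calc ∫ x, Real.exp (2 * (lam * (m - (1 / n) * ∑ i : Fin n, g (x i))
        - lam ^ 2 / (1 - b * lam / n) * (v / n)))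
        ∂(Measure.pi fun _ : Fin n => μ)
      = ∫ x, (∏ i : Fin n, Real.exp (t * (m - g (x i)))) * Real.exp (-((n:ℝ) * A))
        ∂(Measure.pi fun _ : Fin n => μ) := by
        congr 1; funext x
        rw [hrw x, sub_eq_add_neg, Real.exp_add, Real.exp_sum]
    _ = (∫ x : Fin n → 𝒳, ∏ i : Fin n, Real.exp (t * (m - g (x i)))
        ∂(Measure.pi fun _ : Fin n => μ)) * Real.exp (-((n:ℝ) * A)) :=
        integral_mul_const _ _
    _ = K ^ n * Real.exp (-((n:ℝ) * A)) := by rw [hpi]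
    _ ≤ (Real.exp A) ^ n * Real.exp (-((n:ℝ) * A)) := by
        exact mul_le_mul_of_nonneg_right (pow_le_pow_left₀ hKnn hKle n) (Real.exp_pos _).le
    _ = 1 := by
        rw [← Real.exp_nat_mul, ← Real.exp_add]
        simp
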